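/- In the setting of the streak selection bias with τ drawn uniformly from I_k(X): for any non-terminal trial t with k+1 ≤ t ≤ n−1, P(X_t = 1 | τ = t, I_k(X) ≠ ∅) < p. -/

import Mathlib

open Finset

/-- Probability weight of a Bernoulli(p) binary sequence. -/
def wgt {n : ℕ} (p : ℝ) (x : Fin n → Bool) : ℝ :=
  ∏ i, if x i then p else 1 - p

/-- The set of trials that immediately follow `k` consecutive successes. -/
def streakSet {n : ℕ} (k : ℕ) (x : Fin n → Bool) : Finset (Fin n) :=
  Finset.univ.filter (fun i : Fin n =>
    k ≤ i.val ∧ ∀ j : Fin n, i.val - k ≤ j.val → j.val < i.val → x j = true)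

/-- The proportion of successes on the trials that immediately follow `k`
consecutive successes. -/
noncomputable def phat {n : ℕ} (k : ℕ) (x : Fin n → Bool) : ℝ :=
  (∑ i ∈ streakSet k x, if x i then (1:ℝ) else 0) / ((streakSet k x).card : ℝ)

/-- Number of successes in the sequence. -/
def ones {n : ℕ} (x : Fin n → Bool) : ℕ :=
  (Finset.univ.filter (fun i => x i = true)).card

lemma wgt_pos {n : ℕ} {p : ℝ} (hp : 0 < p) (hp1 : p < 1) (x : Fin n → Bool) :
    0 < wgt p x := by
  unfold wgt
  apply Finset.prod_pos
  intro i _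
  split <;> linarith

lemma streak_update {n k : ℕ} (x : Fin n → Bool) (t : Fin n) (c : Bool) :
    t ∈ streakSet k (Function.update x t c) ↔ t ∈ streakSet k x := by
  simp only [streakSet, mem_filter, mem_univ, true_and]
  constructor <;> rintro ⟨h1, h2⟩ <;> refine ⟨h1, fun j hj1 hj2 => ?_⟩
  · have := h2 j hj1 hj2
    rwa [Function.update_of_ne (Fin.ne_of_val_ne (Nat.ne_of_lt hj2))] at this
  · rw [Function.update_of_ne (Fin.ne_of_val_ne (Nat.ne_of_lt hj2))]
    exact h2 j hj1 hj2

lemma streak_mono {n k : ℕ} {x y : Fin n → Bool} (h : ∀ j, x j = true → y j = true) :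
    streakSet k x ⊆ streakSet k y := by
  intro i hi
  simp only [streakSet, mem_filter, mem_univ, true_and] at *
  exact ⟨hi.1, fun j h1 h2 => h j (hi.2 j h1 h2)⟩

lemma card_streak_update_lt {n k : ℕ} (hk : 1 ≤ k) (x : Fin n → Bool) (t : Fin n)
    (hxt : x t = true) (hts : t ∈ streakSet k x) (htn : t.val + 1 < n) :
    (streakSet k (Function.update x t false)).card < (streakSet k x).card := by
  apply Finset.card_lt_card
  constructor
  · apply streak_mono
    intro j hj
    by_cases hjt : j = t
    · exact hjt ▸ hxt
    · rwa [Function.update_of_ne hjt] at hj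
  · intro hsub
    set s : Fin n := ⟨t.val + 1, htn⟩ with hs
    have hst : s ∈ streakSet k x := by
      simp only [streakSet, mem_filter, mem_univ, true_and] at hts ⊢
      refine ⟨le_trans hts.1 (Nat.le_succ _), fun j h1 h2 => ?_⟩
      rcases lt_or_eq_of_le (Nat.lt_succ_iff.mp h2) with h3 | h3
      · exact hts.2 j (le_trans (Nat.sub_le_sub_right (Nat.le_succ _) k) h1) h3
      · have : j = t := Fin.ext h3
        exact this ▸ hxt
    have hst' : s ∉ streakSet k (Function.update x t false) := by
      simp only [streakSet, mem_filter, mem_univ, true_and]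
      rintro ⟨-, h2⟩
      have := h2 t (by show t.val + 1 - k ≤ t.val; omega) (by simp [hs])
      simp at this
    exact hst' (hsub hst)

lemma wgt_update_false {n : ℕ} (p : ℝ) (x : Fin n → Bool) (t : Fin n)
    (hx : x t = true) :
    (1 - p) * wgt p x = p * wgt p (Function.update x t false) := by
  unfold wgt
  have h1 : (fun j => if Function.update x t false j then p else 1 - p)
      = Function.update (fun j => if x j then p else 1 - p) t (1 - p) := by
    funext j
    by_cases hjt : j = t
    · subst hjt; simp
    · simp [Function.update_of_ne hjt]
  have h2 : (fun j => if x j then p else 1 - p)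
      = Function.update (fun j => if x j then p else 1 - p) t p := by
    funext j
    by_cases hjt : j = t
    · subst hjt; simp [hx]
    · simp [Function.update_of_ne hjt]
  calc (1 - p) * ∏ i, (if x i then p else 1 - p)
      = (1 - p) * ∏ i, Function.update (fun j => if x j then p else 1 - p) t p i := by
        rw [← h2]
    _ = (1 - p) * (p * ∏ i ∈ univ.erase t, (if x i then p else 1 - p)) := by
        rw [Finset.prod_update_of_mem (mem_univ t)]
        congr 1
        rw [Finset.sdiff_singleton_eq_erase]
    _ = p * ((1 - p) * ∏ i ∈ univ.erase t, (if x i then p else 1 - p)) := by ring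
    _ = p * ∏ i, Function.update (fun j => if x j then p else 1 - p) t (1 - p) i := by
        rw [Finset.prod_update_of_mem (mem_univ t), Finset.sdiff_singleton_eq_erase]
    _ = p * ∏ i, (if Function.update x t false i then p else 1 - p) := by rw [h1]

/-- At any non-terminal trial, the conditional probability of success given that it
was the selected trial is strictly less than p. -/
theorem stmt10 (n k : ℕ) (hn : 3 ≤ n) (hk : 1 ≤ k) (hk2 : k ≤ n - 2)
    (p : ℝ) (hp : 0 < p) (hp1 : p < 1) (t : Fin n) (ht : k ≤ t.val) (ht2 : t.val < n - 1) :
    (∑ x : Fin n → Bool,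
        if t ∈ streakSet k x ∧ x t = true then
          wgt p x / ((streakSet k x).card : ℝ) else 0) /
    (∑ x : Fin n → Bool,
        if t ∈ streakSet k x then wgt p x / ((streakSet k x).card : ℝ) else 0) < p := by
  have htn : t.val + 1 < n := by omega
  set f : (Fin n → Bool) → ℝ := fun x => wgt p x / ((streakSet k x).card : ℝ) with hf
  set A : Finset (Fin n → Bool) :=
    univ.filter (fun x => t ∈ streakSet k x ∧ x t = true) with hA
  set B : Finset (Fin n → Bool) :=
    univ.filter (fun x => t ∈ streakSet k x ∧ x t = false) with hB
  have hS1 : (∑ x : Fin n → Bool,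
      if t ∈ streakSet k x ∧ x t = true then f x else 0) = ∑ x ∈ A, f x :=
    (Finset.sum_filter _ _).symm
  have hS0 : (∑ x : Fin n → Bool,
      if t ∈ streakSet k x ∧ x t = false then f x else 0) = ∑ x ∈ B, f x :=
    (Finset.sum_filter _ _).symm
  -- denominator splits
  have hsplit : (∑ x : Fin n → Bool, if t ∈ streakSet k x then f x else 0)
      = (∑ x ∈ A, f x) + (∑ x ∈ B, f x) := by
    rw [← hS1, ← hS0, ← Finset.sum_add_distrib]
    apply Finset.sum_congr rfl
    intro x _
    by_cases h1 : t ∈ streakSet k x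
    · cases h2 : x t <;> simp [h1, h2]
    · simp [h1]
  -- positivity of terms on A and B
  have hcard_pos : ∀ x : Fin n → Bool, t ∈ streakSet k x →
      (0:ℝ) < ((streakSet k x).card : ℝ) := by
    intro x hx
    exact_mod_cast Finset.card_pos.mpr ⟨t, hx⟩
  have hf_pos : ∀ x : Fin n → Bool, t ∈ streakSet k x → 0 < f x := fun x hx =>
    div_pos (wgt_pos hp hp1 x) (hcard_pos x hx)
  have hAne : A.Nonempty := ⟨fun _ => true, by simp [hA, streakSet, ht]⟩
  have hS1pos : 0 < ∑ x ∈ A, f x := by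
    apply Finset.sum_pos (fun x hx => ?_) hAne
    simp only [hA, mem_filter, mem_univ, true_and] at hx
    exact hf_pos x hx.1
  -- key strict inequality
  have hkey : (1 - p) * (∑ x ∈ A, f x) < p * (∑ x ∈ B, f x) := by
    rw [Finset.mul_sum, Finset.mul_sum]
    have hbij : (∑ x ∈ B, p * f x)
        = ∑ x ∈ A, p * f (Function.update x t false) := by
      refine Finset.sum_nbij' (fun y => Function.update y t true)
        (fun x => Function.update x t false) ?_ ?_ ?_ ?_ ?_
      · intro y hy
        simp only [hB, hA, mem_filter, mem_univ, true_and] at hy ⊢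
        exact ⟨(streak_update y t true).mpr hy.1, Function.update_self t true y⟩
      · intro x hx
        simp only [hA, hB, mem_filter, mem_univ, true_and] at hx ⊢
        exact ⟨(streak_update x t false).mpr hx.1, Function.update_self t false x⟩
      · intro y hy
        simp only [hB, mem_filter, mem_univ, true_and] at hy
        show Function.update (Function.update y t true) t false = y
        rw [Function.update_idem, ← hy.2, Function.update_eq_self]
      · intro x hx
        simp only [hA, mem_filter, mem_univ, true_and] at hx
        show Function.update (Function.update x t false) t true = x
        rw [Function.update_idem, ← hx.2, Function.update_eq_self]
      · intro y hy
        simp only [hB, mem_filter, mem_univ, true_and] at hy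
        show p * f y = p * f (Function.update (Function.update y t true) t false)
        congr 2
        rw [Function.update_idem, ← hy.2, Function.update_eq_self]
    rw [hbij]
    apply Finset.sum_lt_sum_of_nonempty hAne
    intro x hx
    simp only [hA, mem_filter, mem_univ, true_and] at hx
    obtain ⟨hts, hxt⟩ := hx
    set x' := Function.update x t false with hx'
    have hts' : t ∈ streakSet k x' := (streak_update x t false).mpr hts
    have hcard' : (0:ℝ) < ((streakSet k x').card : ℝ) := hcard_pos x' hts'
    have hcardlt : ((streakSet k x').card : ℝ) < ((streakSet k x).card : ℝ) := by
      exact_mod_cast card_streak_update_lt hk x t hxt hts htn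
    have hw : (1 - p) * wgt p x = p * wgt p x' := wgt_update_false p x t hxt
    have hwpos : 0 < p * wgt p x' := mul_pos hp (wgt_pos hp hp1 x')
    calc (1 - p) * f x = ((1 - p) * wgt p x) / ((streakSet k x).card : ℝ) := by
          rw [hf]; ring
      _ = (p * wgt p x') / ((streakSet k x).card : ℝ) := by rw [hw]
      _ < (p * wgt p x') / ((streakSet k x').card : ℝ) :=
          div_lt_div_of_pos_left hwpos hcard' hcardlt
      _ = p * f x' := by rw [hf]; ring
  have hS0pos : 0 < ∑ x ∈ B, f x := by
    have h1p : (0:ℝ) < 1 - p := by linarith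
    nlinarith
  rw [hS1, hsplit]
  rw [div_lt_iff₀ (by linarith)]
  nlinarith
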